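/- Let Q = {(ξ,θ) ∈ ℝ^{p+n} : Aξ + Bθ ≤ c} be a nonempty polyhedron and fix λ > 0. For y ∈ ℝⁿ let (θ̂_λ(y), ξ̂_λ(y)) = argmin over (ξ,θ) ∈ Q of (1/2)‖θ − y‖₂² + (λ/2)‖ξ‖₂². Then: (i) the minimizer (θ̂_λ(y), ξ̂_λ(y)) is unique for each y; (ii) for Lebesgue-almost every y ∈ ℝⁿ, θ̂_λ is differentiable at y and its divergence equals D(y) = n − trace( B_{I_y}ᵀ ( B_{I_y} B_{I_y}ᵀ + (1/λ) A_{I_y} A_{I_y}ᵀ )^{-1} B_{I_y} ), where J_y = {1 ≤ i ≤ m : ⟨a_i, ξ̂_λ(y)⟩ + ⟨b_i, θ̂_λ(y)⟩ = c_i}, I_y ⊆ J_y is any index set such that the rows {[a_iᵀ, b_iᵀ] : i ∈ I_y} form a maximal linearly independent subset of the rows of [A_{J_y}, B_{J_y}], and the matrix B_{I_y} B_{I_y}ᵀ + (1/λ) A_{I_y} A_{I_y}ᵀ is invertible for any such I_y. -/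

import Mathlib

open Matrix MeasureTheory

/-- The divergence of a map `ℝⁿ → ℝⁿ` at `y`: the trace of its derivative,
`∑ i, ∂fᵢ/∂yᵢ (y)`. -/
noncomputable def divg {n : ℕ} (f : (Fin n → ℝ) → (Fin n → ℝ)) (y : Fin n → ℝ) : ℝ :=
  ∑ i, fderiv ℝ f y (Pi.single i 1) i

namespace QPPaux

variable {m p n : ℕ}

/-- The quadratic objective. -/
noncomputable def obj (lam : ℝ) (y : Fin n → ℝ) (ξ : Fin p → ℝ) (θ : Fin n → ℝ) : ℝ :=
  (1/2) * (∑ j, (θ j - y j)^2) + (lam/2) * (∑ j, (ξ j)^2)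

def feas (A : Matrix (Fin m) (Fin p) ℝ) (B : Matrix (Fin m) (Fin n) ℝ) (c : Fin m → ℝ)
    (ξ : Fin p → ℝ) (θ : Fin n → ℝ) : Prop := A.mulVec ξ + B.mulVec θ ≤ c

lemma sum_sq_add {N : ℕ} (f g : Fin N → ℝ) (t : ℝ) :
    ∑ j, (f j + t * g j)^2
      = ∑ j, (f j)^2 + 2*t*(∑ j, f j * g j) + t^2 * ∑ j, (g j)^2 := by
  rw [Finset.mul_sum, Finset.mul_sum, ← Finset.sum_add_distrib, ← Finset.sum_add_distrib]
  exact Finset.sum_congr rfl fun j _ => by ring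

lemma obj_expand (lam : ℝ) (y : Fin n → ℝ) (ξ dξ : Fin p → ℝ) (θ dθ : Fin n → ℝ) (t : ℝ) :
    obj lam y (ξ + t • dξ) (θ + t • dθ)
      = obj lam y ξ θ + t * (lam * (ξ ⬝ᵥ dξ) + (θ - y) ⬝ᵥ dθ)
        + t^2 * ((lam/2) * (dξ ⬝ᵥ dξ) + (1/2) * (dθ ⬝ᵥ dθ)) := by
  have h1 : ∑ j, ((θ + t • dθ) j - y j)^2
      = ∑ j, (θ j - y j)^2 + 2*t*(∑ j, (θ j - y j) * dθ j) + t^2 * ∑ j, (dθ j)^2 := by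
    have := sum_sq_add (fun j => θ j - y j) dθ t
    simpa [add_sub_right_comm] using this
  have h2 : ∑ j, ((ξ + t • dξ) j)^2
      = ∑ j, (ξ j)^2 + 2*t*(∑ j, ξ j * dξ j) + t^2 * ∑ j, (dξ j)^2 := by
    simpa using sum_sq_add ξ dξ t
  simp only [obj, h1, h2, dotProduct, Pi.sub_apply]
  have e1 : ∑ j, (dθ j)^2 = ∑ j, dθ j * dθ j := by
    exact Finset.sum_congr rfl fun j _ => sq (dθ j) ▸ (sq (dθ j)).symm ▸ by ring
  have e2 : ∑ j, (dξ j)^2 = ∑ j, dξ j * dξ j := Finset.sum_congr rfl fun j _ => by ring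
  rw [e1, e2]; ring

/-- Strict-convexity based uniqueness of minimizers (midpoint argument). -/
lemma min_unique {lam : ℝ} (hlam : 0 < lam) {y : Fin n → ℝ}
    {ξ₀ ξ₁ : Fin p → ℝ} {θ₀ θ₁ : Fin n → ℝ}
    (h1 : obj lam y ξ₁ θ₁ ≤ obj lam y ξ₀ θ₀)
    (hm : obj lam y ξ₀ θ₀ ≤ obj lam y (ξ₀ + (1/2 : ℝ) • (ξ₁ - ξ₀)) (θ₀ + (1/2 : ℝ) • (θ₁ - θ₀))) :
    ξ₀ = ξ₁ ∧ θ₀ = θ₁ := by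
  have hexp := obj_expand lam y ξ₀ (ξ₁ - ξ₀) θ₀ (θ₁ - θ₀) (1/2)
  have hexp1 := obj_expand lam y ξ₀ (ξ₁ - ξ₀) θ₀ (θ₁ - θ₀) 1
  have hone : obj lam y ξ₁ θ₁ = obj lam y (ξ₀ + (1:ℝ) • (ξ₁ - ξ₀)) (θ₀ + (1:ℝ) • (θ₁ - θ₀)) := by
    congr 1 <;> funext j <;> simp
  set G : ℝ := lam * (ξ₀ ⬝ᵥ (ξ₁ - ξ₀)) + (θ₀ - y) ⬝ᵥ (θ₁ - θ₀) with hG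
  set Qd : ℝ := (lam/2) * ((ξ₁ - ξ₀) ⬝ᵥ (ξ₁ - ξ₀)) + (1/2) * ((θ₁ - θ₀) ⬝ᵥ (θ₁ - θ₀)) with hQd
  clear_value G Qd
  have hA : 0 ≤ (1/2) * G + (1/4) * Qd := by
    have := hm; rw [hexp] at this; norm_num at this ⊢; linarith
  have hB : G + Qd ≤ 0 := by
    have := h1; rw [hone, hexp1] at this; norm_num at this; linarith
  have hQd0 : Qd ≤ 0 := by linarith
  have hx : 0 ≤ (ξ₁ - ξ₀) ⬝ᵥ (ξ₁ - ξ₀) := Finset.sum_nonneg fun j _ => mul_self_nonneg _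
  have ht : 0 ≤ (θ₁ - θ₀) ⬝ᵥ (θ₁ - θ₀) := Finset.sum_nonneg fun j _ => mul_self_nonneg _
  have hx0 : (ξ₁ - ξ₀) ⬝ᵥ (ξ₁ - ξ₀) = 0 := by
    by_contra h
    have hx' : 0 < (ξ₁ - ξ₀) ⬝ᵥ (ξ₁ - ξ₀) := lt_of_le_of_ne hx (Ne.symm h)
    nlinarith [mul_pos hlam hx']
  have ht0 : (θ₁ - θ₀) ⬝ᵥ (θ₁ - θ₀) = 0 := by
    rw [hQd, hx0] at hQd0; nlinarith
  constructor
  · funext j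
    have h0 : ∀ i ∈ (Finset.univ : Finset (Fin p)), (0:ℝ) ≤ (ξ₁ - ξ₀) i * (ξ₁ - ξ₀) i :=
      fun i _ => mul_self_nonneg _
    have hj := (Finset.sum_eq_zero_iff_of_nonneg h0).1 hx0 j (Finset.mem_univ j)
    have hj' : (ξ₁ - ξ₀) j = 0 := mul_self_eq_zero.mp hj
    have : ξ₁ j - ξ₀ j = 0 := by simpa using hj'
    linarith
  · funext j
    have h0 : ∀ i ∈ (Finset.univ : Finset (Fin n)), (0:ℝ) ≤ (θ₁ - θ₀) i * (θ₁ - θ₀) i :=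
      fun i _ => mul_self_nonneg _
    have hj := (Finset.sum_eq_zero_iff_of_nonneg h0).1 ht0 j (Finset.mem_univ j)
    have hj' : (θ₁ - θ₀) j = 0 := mul_self_eq_zero.mp hj
    have : θ₁ j - θ₀ j = 0 := by simpa using hj'
    linarith




def AI (A : Matrix (Fin m) (Fin p) ℝ) (I : Finset (Fin m)) : Matrix I (Fin p) ℝ :=
  A.submatrix (fun i : I => (i : Fin m)) id

def BI (B : Matrix (Fin m) (Fin n) ℝ) (I : Finset (Fin m)) : Matrix I (Fin n) ℝ :=
  B.submatrix (fun i : I => (i : Fin m)) id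

noncomputable def MI (A : Matrix (Fin m) (Fin p) ℝ) (B : Matrix (Fin m) (Fin n) ℝ)
    (lam : ℝ) (I : Finset (Fin m)) : Matrix I I ℝ :=
  BI B I * (BI B I)ᵀ + (1/lam) • (AI A I * (AI A I)ᵀ)

def cI (c : Fin m → ℝ) (I : Finset (Fin m)) : I → ℝ := fun i => c i

noncomputable def uu (A : Matrix (Fin m) (Fin p) ℝ) (B : Matrix (Fin m) (Fin n) ℝ)
    (c : Fin m → ℝ) (lam : ℝ) (I : Finset (Fin m)) (y : Fin n → ℝ) : I → ℝ :=
  (MI A B lam I)⁻¹ *ᵥ (BI B I *ᵥ y - cI c I)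

noncomputable def xiI (A : Matrix (Fin m) (Fin p) ℝ) (B : Matrix (Fin m) (Fin n) ℝ)
    (c : Fin m → ℝ) (lam : ℝ) (I : Finset (Fin m)) (y : Fin n → ℝ) : Fin p → ℝ :=
  (-(1/lam)) • ((AI A I)ᵀ *ᵥ uu A B c lam I y)

noncomputable def thI (A : Matrix (Fin m) (Fin p) ℝ) (B : Matrix (Fin m) (Fin n) ℝ)
    (c : Fin m → ℝ) (lam : ℝ) (I : Finset (Fin m)) (y : Fin n → ℝ) : Fin n → ℝ :=
  y - (BI B I)ᵀ *ᵥ uu A B c lam I y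

variable {A : Matrix (Fin m) (Fin p) ℝ} {B : Matrix (Fin m) (Fin n) ℝ}
  {c : Fin m → ℝ} {lam : ℝ} {I : Finset (Fin m)}

/-- Gram positivity: quadratic form of `MI`. -/
lemma quadform_MI (hlam : 0 < lam) (v : I → ℝ) :
    v ⬝ᵥ (MI A B lam I *ᵥ v)
      = (v ᵥ* BI B I) ⬝ᵥ (v ᵥ* BI B I) + (1/lam) * ((v ᵥ* AI A I) ⬝ᵥ (v ᵥ* AI A I)) := by
  have hB : v ⬝ᵥ ((BI B I * (BI B I)ᵀ) *ᵥ v) = (v ᵥ* BI B I) ⬝ᵥ (v ᵥ* BI B I) := by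
    rw [← mulVec_mulVec, dotProduct_mulVec, mulVec_transpose]
  have hA : v ⬝ᵥ ((AI A I * (AI A I)ᵀ) *ᵥ v) = (v ᵥ* AI A I) ⬝ᵥ (v ᵥ* AI A I) := by
    rw [← mulVec_mulVec, dotProduct_mulVec, mulVec_transpose]
  simp only [MI, add_mulVec, dotProduct_add, smul_mulVec, dotProduct_smul, smul_eq_mul,
    hB, hA]

/-- Linear independence of the active appended rows makes the Gram-type matrix invertible. -/
lemma isUnit_MI (hlam : 0 < lam)
    (hind : LinearIndependent ℝ (fun i : I => Fin.append (A i.1) (B i.1))) :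
    IsUnit (MI A B lam I) := by
  rw [Matrix.isUnit_iff_isUnit_det, isUnit_iff_ne_zero]
  intro hdet
  obtain ⟨v, hv0, hv⟩ := (Matrix.exists_mulVec_eq_zero_iff).2 hdet
  have hq := quadform_MI (A := A) (B := B) (I := I) hlam v
  rw [hv, dotProduct_zero] at hq
  have h1 : 0 ≤ (v ᵥ* BI B I) ⬝ᵥ (v ᵥ* BI B I) := Finset.sum_nonneg fun j _ => mul_self_nonneg _
  have h2 : 0 ≤ (v ᵥ* AI A I) ⬝ᵥ (v ᵥ* AI A I) := Finset.sum_nonneg fun j _ => mul_self_nonneg _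
  have hinv : 0 < 1/lam := by positivity
  have hX0 : (v ᵥ* BI B I) ⬝ᵥ (v ᵥ* BI B I) = 0 := by nlinarith
  have hY0 : (v ᵥ* AI A I) ⬝ᵥ (v ᵥ* AI A I) = 0 := by nlinarith
  have hBv : v ᵥ* BI B I = 0 := dotProduct_self_eq_zero.mp hX0
  have hAv : v ᵥ* AI A I = 0 := dotProduct_self_eq_zero.mp hY0
  apply hv0
  have hz : ∑ i : I, v i • Fin.append (A i.1) (B i.1) = 0 := by
    funext j
    refine Fin.addCases (fun j0 => ?_) (fun j0 => ?_) j
    · have := congrFun hAv j0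
      simpa [Matrix.vecMul, dotProduct, AI, Fin.append_left, Finset.sum_apply,
        Pi.smul_apply, smul_eq_mul] using this
    · have := congrFun hBv j0
      simpa [Matrix.vecMul, dotProduct, BI, Fin.append_right, Finset.sum_apply,
        Pi.smul_apply, smul_eq_mul] using this
  funext i
  exact Fintype.linearIndependent_iff.1 hind v hz i


lemma MI_mulVec_uu (hM : IsUnit (MI A B lam I)) (y : Fin n → ℝ) :
    MI A B lam I *ᵥ uu A B c lam I y = BI B I *ᵥ y - cI c I := by
  rw [uu, mulVec_mulVec, Matrix.mul_nonsing_inv _ ((Matrix.isUnit_iff_isUnit_det _).1 hM),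
    one_mulVec]

lemma rows_xI (hM : IsUnit (MI A B lam I)) (y : Fin n → ℝ) :
    AI A I *ᵥ xiI A B c lam I y + BI B I *ᵥ thI A B c lam I y = cI c I := by
  have h3 := MI_mulVec_uu (A := A) (c := c) hM y
  rw [MI, add_mulVec, smul_mulVec] at h3
  have h1 : AI A I *ᵥ xiI A B c lam I y
      = (-(1/lam)) • ((AI A I * (AI A I)ᵀ) *ᵥ uu A B c lam I y) := by
    rw [xiI, mulVec_smul, mulVec_mulVec]
  have h2 : BI B I *ᵥ thI A B c lam I y
      = BI B I *ᵥ y - (BI B I * (BI B I)ᵀ) *ᵥ uu A B c lam I y := by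
    rw [thI, mulVec_sub, mulVec_mulVec]
  rw [h1, h2, neg_smul]
  have h4 : (BI B I * (BI B I)ᵀ) *ᵥ uu A B c lam I y
      = BI B I *ᵥ y - cI c I - (1/lam) • ((AI A I * (AI A I)ᵀ) *ᵥ uu A B c lam I y) := by
    rw [← h3]; abel
  rw [h4]; abel

lemma lam_smul_xiI (hlam : 0 < lam) (y : Fin n → ℝ) :
    lam • xiI A B c lam I y = -((AI A I)ᵀ *ᵥ uu A B c lam I y) := by
  rw [xiI, smul_smul]
  have : lam * (-(1/lam)) = -1 := by field_simp
  rw [this, neg_one_smul]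

lemma thI_sub_y (y : Fin n → ℝ) :
    thI A B c lam I y - y = -((BI B I)ᵀ *ᵥ uu A B c lam I y) := by
  rw [thI]; abel

/-- The gradient term at the candidate solution equals a multiplier pairing. -/
lemma grad_eq (hM : IsUnit (MI A B lam I)) (hlam : 0 < lam) (y : Fin n → ℝ)
    (ζ : Fin p → ℝ) (η : Fin n → ℝ) :
    lam * (xiI A B c lam I y ⬝ᵥ (ζ - xiI A B c lam I y))
      + (thI A B c lam I y - y) ⬝ᵥ (η - thI A B c lam I y)
      = uu A B c lam I y ⬝ᵥ (cI c I - (AI A I *ᵥ ζ + BI B I *ᵥ η)) := by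
  set u := uu A B c lam I y with hu
  have e1 : lam * (xiI A B c lam I y ⬝ᵥ (ζ - xiI A B c lam I y))
      = -(u ⬝ᵥ (AI A I *ᵥ (ζ - xiI A B c lam I y))) := by
    rw [← smul_eq_mul, ← smul_dotProduct, lam_smul_xiI hlam, neg_dotProduct,
      mulVec_transpose, ← dotProduct_mulVec]
  have e2 : (thI A B c lam I y - y) ⬝ᵥ (η - thI A B c lam I y)
      = -(u ⬝ᵥ (BI B I *ᵥ (η - thI A B c lam I y))) := by
    rw [thI_sub_y, neg_dotProduct, mulVec_transpose, ← dotProduct_mulVec]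
  have hrows := congrArg (fun w => u ⬝ᵥ w) (rows_xI (A := A) (B := B) (c := c) hM y)
  simp only [dotProduct_add] at hrows
  rw [e1, e2]
  simp only [mulVec_sub, dotProduct_sub, dotProduct_add]
  linarith

/-- The fundamental region on which the candidate affine solution is the projection. -/
def TI (A : Matrix (Fin m) (Fin p) ℝ) (B : Matrix (Fin m) (Fin n) ℝ) (c : Fin m → ℝ)
    (lam : ℝ) (I : Finset (Fin m)) : Set (Fin n → ℝ) :=
  {y | IsUnit (MI A B lam I) ∧ feas A B c (xiI A B c lam I y) (thI A B c lam I y) ∧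
    ∀ ζ η, feas A B c ζ η →
      0 ≤ uu A B c lam I y ⬝ᵥ (cI c I - (AI A I *ᵥ ζ + BI B I *ᵥ η))}

lemma continuous_mulVec' {a b : Type} [Fintype a] [Fintype b] (N : Matrix a b ℝ) :
    Continuous (fun v : b → ℝ => N *ᵥ v) :=
  (Matrix.mulVecLin N).continuous_of_finiteDimensional

lemma continuous_uu : Continuous (uu A B c lam I) := by
  unfold uu
  exact (continuous_mulVec' _).comp ((continuous_mulVec' _).sub continuous_const)

lemma continuous_xiI : Continuous (xiI A B c lam I) := by
  unfold xiI
  exact ((continuous_const (y := (-(1/lam) : ℝ))).smul ((continuous_mulVec' (AI A I)ᵀ).comp continuous_uu))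

lemma continuous_thI : Continuous (thI A B c lam I) := by
  unfold thI
  exact continuous_id.sub ((continuous_mulVec' _).comp continuous_uu)

lemma isClosed_TI : IsClosed (TI A B c lam I) := by
  have h1 : IsClosed {y : Fin n → ℝ | IsUnit (MI A B lam I)} := by
    by_cases h : IsUnit (MI A B lam I)
    · convert isClosed_univ using 1; ext y; simp [h]
    · convert isClosed_empty using 1; ext y; simp [h]
  have h2 : IsClosed {y : Fin n → ℝ |
      feas A B c (xiI A B c lam I y) (thI A B c lam I y)} := by
    have : {y : Fin n → ℝ | feas A B c (xiI A B c lam I y) (thI A B c lam I y)}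
        = ⋂ i : Fin m, {y | (A *ᵥ xiI A B c lam I y + B *ᵥ thI A B c lam I y) i ≤ c i} := by
      ext y; simp [feas, Set.mem_iInter, Pi.le_def]
    rw [this]
    refine isClosed_iInter fun i => isClosed_le ?_ continuous_const
    exact (continuous_apply i).comp
      (((continuous_mulVec' A).comp continuous_xiI).add ((continuous_mulVec' B).comp continuous_thI))
  have h3 : IsClosed {y : Fin n → ℝ | ∀ ζ η, feas A B c ζ η →
      0 ≤ uu A B c lam I y ⬝ᵥ (cI c I - (AI A I *ᵥ ζ + BI B I *ᵥ η))} := by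
    have : {y : Fin n → ℝ | ∀ ζ η, feas A B c ζ η →
        0 ≤ uu A B c lam I y ⬝ᵥ (cI c I - (AI A I *ᵥ ζ + BI B I *ᵥ η))}
        = ⋂ (ζ : Fin p → ℝ) (η : Fin n → ℝ) (_ : feas A B c ζ η),
          {y | 0 ≤ uu A B c lam I y ⬝ᵥ (cI c I - (AI A I *ᵥ ζ + BI B I *ᵥ η))} := by
      ext y; simp [Set.mem_iInter]
    rw [this]
    refine isClosed_iInter fun ζ => isClosed_iInter fun η => isClosed_iInter fun _ => ?_
    refine isClosed_le continuous_const ?_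
    have : Continuous fun y : Fin n → ℝ =>
        ∑ i, uu A B c lam I y i * (cI c I - (AI A I *ᵥ ζ + BI B I *ᵥ η)) i :=
      continuous_finset_sum _ fun i _ => ((continuous_apply i).comp continuous_uu).mul
        continuous_const
    exact this
  have : TI A B c lam I = _ ∩ (_ ∩ _) := rfl
  exact h1.inter (h2.inter h3)


lemma uu_affine {a b : ℝ} (hab : a + b = 1) (y₀ y₁ : Fin n → ℝ) :
    uu A B c lam I (a • y₀ + b • y₁) = a • uu A B c lam I y₀ + b • uu A B c lam I y₁ := by
  unfold uu
  have key : BI B I *ᵥ (a • y₀ + b • y₁) - cI c I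
      = a • (BI B I *ᵥ y₀ - cI c I) + b • (BI B I *ᵥ y₁ - cI c I) := by
    funext i
    simp only [mulVec_add, mulVec_smul, Pi.add_apply, Pi.sub_apply, Pi.smul_apply, smul_eq_mul]
    linear_combination (cI c I i) * hab
  rw [key, mulVec_add, mulVec_smul, mulVec_smul]

lemma xiI_affine {a b : ℝ} (hab : a + b = 1) (y₀ y₁ : Fin n → ℝ) :
    xiI A B c lam I (a • y₀ + b • y₁)
      = a • xiI A B c lam I y₀ + b • xiI A B c lam I y₁ := by
  unfold xiI
  rw [uu_affine hab, mulVec_add, mulVec_smul, mulVec_smul, smul_add, smul_smul, smul_smul,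
    smul_smul, smul_smul]
  congr 1 <;> congr 1 <;> ring

lemma thI_affine {a b : ℝ} (hab : a + b = 1) (y₀ y₁ : Fin n → ℝ) :
    thI A B c lam I (a • y₀ + b • y₁)
      = a • thI A B c lam I y₀ + b • thI A B c lam I y₁ := by
  unfold thI
  rw [uu_affine hab, mulVec_add, mulVec_smul, mulVec_smul]
  funext j
  simp only [Pi.add_apply, Pi.sub_apply, Pi.smul_apply, smul_eq_mul]
  ring

lemma convex_TI : Convex ℝ (TI A B c lam I) := by
  intro y₀ hy₀ y₁ hy₁ a b ha hb hab
  obtain ⟨hM, hf₀, hv₀⟩ := hy₀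
  obtain ⟨-, hf₁, hv₁⟩ := hy₁
  refine ⟨hM, ?_, ?_⟩
  · intro i
    have h₀ := hf₀ i
    have h₁ := hf₁ i
    simp only [Pi.add_apply] at h₀ h₁ ⊢
    rw [xiI_affine hab, thI_affine hab]
    simp only [mulVec_add, mulVec_smul, Pi.add_apply, Pi.smul_apply, smul_eq_mul]
    have hc : a * c i + b * c i = c i := by linear_combination (c i) * hab
    linarith [mul_le_mul_of_nonneg_left h₀ ha, mul_le_mul_of_nonneg_left h₁ hb]
  · intro ζ η hfz
    rw [uu_affine hab, add_dotProduct, smul_dotProduct, smul_dotProduct, smul_eq_mul, smul_eq_mul]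
    linarith [mul_nonneg ha (hv₀ ζ η hfz), mul_nonneg hb (hv₁ ζ η hfz)]

/-- At a point of `TI`, the candidate solution is a global minimizer of the objective. -/
lemma TI_opt (hlam : 0 < lam) {y : Fin n → ℝ} (hy : y ∈ TI A B c lam I) :
    ∀ ζ η, feas A B c ζ η →
      obj lam y (xiI A B c lam I y) (thI A B c lam I y) ≤ obj lam y ζ η := by
  obtain ⟨hM, hf, hv⟩ := hy
  intro ζ η hfz
  have hexp := obj_expand lam y (xiI A B c lam I y) (ζ - xiI A B c lam I y)
    (thI A B c lam I y) (η - thI A B c lam I y) 1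
  have hζ : xiI A B c lam I y + (1:ℝ) • (ζ - xiI A B c lam I y) = ζ := by
    funext j; simp
  have hη : thI A B c lam I y + (1:ℝ) • (η - thI A B c lam I y) = η := by
    funext j; simp
  rw [hζ, hη] at hexp
  have hG := grad_eq (A := A) (B := B) (c := c) hM hlam y ζ η
  have hGnn := hv ζ η hfz
  have hq1 : 0 ≤ (ζ - xiI A B c lam I y) ⬝ᵥ (ζ - xiI A B c lam I y) :=
    Finset.sum_nonneg fun j _ => mul_self_nonneg _
  have hq2 : 0 ≤ (η - thI A B c lam I y) ⬝ᵥ (η - thI A B c lam I y) :=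
    Finset.sum_nonneg fun j _ => mul_self_nonneg _
  rw [hexp]
  nlinarith


lemma append_dotProduct (a x : Fin p → ℝ) (b z : Fin n → ℝ) :
    Fin.append a b ⬝ᵥ Fin.append x z = a ⬝ᵥ x + b ⬝ᵥ z := by
  simp only [dotProduct]
  rw [Fin.sum_univ_add]
  congr 1 <;> exact Finset.sum_congr rfl fun j _ => by
    simp [Fin.append_left, Fin.append_right]

/-- Any finite family contains an independent spanning subfamily. -/
lemma exists_indep_span {V : Type*} [AddCommGroup V] [Module ℝ V]
    (v : Fin m → V) (J : Finset (Fin m)) :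
    ∃ I ⊆ J, LinearIndependent ℝ (fun i : I => v i) ∧
      ∀ j ∈ J, v j ∈ Submodule.span ℝ (Set.range (fun i : I => v i.1)) := by
  classical
  induction J using Finset.strongInductionOn with
  | _ J ih =>
    by_cases hind : LinearIndependent ℝ (fun i : J => v i)
    · exact ⟨J, le_refl _, hind, fun j hj => Submodule.subset_span ⟨⟨j, hj⟩, rfl⟩⟩
    · obtain ⟨g, hg0, i₀, hi₀⟩ := Fintype.not_linearIndependent_iff.1 hind
      have hkey : v i₀.1 ∈ Submodule.span ℝ (Set.range (fun i : (J.erase i₀.1) => v i.1)) := by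
        have hsum : g i₀ • v i₀.1 = -∑ i ∈ Finset.univ.erase i₀, g i • v i.1 := by
          have h0 : ∑ i : J, g i • v i.1 = 0 := hg0
          rw [← Finset.add_sum_erase Finset.univ (fun i : J => g i • v i.1)
            (Finset.mem_univ i₀)] at h0
          linear_combination (norm := abel) h0
        have hv : v i₀.1 = -((g i₀)⁻¹ • ∑ i ∈ Finset.univ.erase i₀, g i • v i.1) := by
          have := congrArg (fun w => (g i₀)⁻¹ • w) hsum
          simp only [smul_smul, inv_mul_cancel₀ hi₀, one_smul, smul_neg] at this
          exact this
        rw [hv]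
        refine Submodule.neg_mem _ (Submodule.smul_mem _ _ (Submodule.sum_mem _ fun i hi => ?_))
        refine Submodule.smul_mem _ _ (Submodule.subset_span ?_)
        have hne : i.1 ≠ i₀.1 := fun h => (Finset.mem_erase.1 hi).1 (Subtype.ext h)
        exact ⟨⟨i.1, Finset.mem_erase.2 ⟨hne, i.2⟩⟩, rfl⟩
      obtain ⟨I, hIJ, hI1, hI2⟩ := ih (J.erase i₀.1) (Finset.erase_ssubset i₀.2)
      have hspanle : Submodule.span ℝ (Set.range (fun i : (J.erase i₀.1) => v i.1))
          ≤ Submodule.span ℝ (Set.range (fun i : I => v i.1)) := by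
        rw [Submodule.span_le]
        rintro _ ⟨i, rfl⟩
        exact hI2 i.1 i.2
      refine ⟨I, hIJ.trans (Finset.erase_subset _ _), hI1, fun j hj => ?_⟩
      by_cases hji : j = i₀.1
      · subst hji; exact hspanle hkey
      · exact hI2 j (Finset.mem_erase.2 ⟨hji, hj⟩)


/-- Feasible segment: moving from a feasible point towards a feasible point stays feasible. -/
lemma feas_segment {ξ θ ζ η : _} (hf : feas A B c ξ θ) (hz : feas A B c ζ η)
    {t : ℝ} (ht0 : 0 ≤ t) (ht1 : t ≤ 1) :
    feas A B c (ξ + t • (ζ - ξ)) (θ + t • (η - θ)) := by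
  intro i
  have h₀ := hf i
  have h₁ := hz i
  simp only [Pi.add_apply, mulVec_add, mulVec_smul, mulVec_sub, Pi.smul_apply, Pi.sub_apply,
    smul_eq_mul] at h₀ h₁ ⊢
  nlinarith [mul_le_mul_of_nonneg_left h₁ ht0, mul_le_mul_of_nonneg_left h₀ (by linarith : 0 ≤ 1 - t)]

/-- Variational inequality at a global minimizer. -/
lemma opt_VI (hlam : 0 < lam) {y : Fin n → ℝ} {ξ : Fin p → ℝ} {θ : Fin n → ℝ}
    (hf : feas A B c ξ θ)
    (hopt : ∀ ζ η, feas A B c ζ η → obj lam y ξ θ ≤ obj lam y ζ η)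
    {ζ : Fin p → ℝ} {η : Fin n → ℝ} (hz : feas A B c ζ η) :
    0 ≤ lam * (ξ ⬝ᵥ (ζ - ξ)) + (θ - y) ⬝ᵥ (η - θ) := by
  set G : ℝ := lam * (ξ ⬝ᵥ (ζ - ξ)) + (θ - y) ⬝ᵥ (η - θ) with hG
  set Qd : ℝ := (lam/2) * ((ζ - ξ) ⬝ᵥ (ζ - ξ)) + (1/2) * ((η - θ) ⬝ᵥ (η - θ)) with hQd
  have hQnn : 0 ≤ Qd := by
    have hq1 : 0 ≤ (ζ - ξ) ⬝ᵥ (ζ - ξ) := Finset.sum_nonneg fun j _ => mul_self_nonneg _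
    have hq2 : 0 ≤ (η - θ) ⬝ᵥ (η - θ) := Finset.sum_nonneg fun j _ => mul_self_nonneg _
    rw [hQd]; positivity
  by_contra hGlt
  push_neg at hGlt
  set t : ℝ := min 1 (-G / (Qd + 1)) with ht
  have ht0 : 0 < t := by
    apply lt_min one_pos
    apply div_pos (by linarith) (by linarith)
  have ht1 : t ≤ 1 := min_le_left _ _
  have ht2 : t * (Qd + 1) ≤ -G := by
    have := min_le_right 1 (-G / (Qd + 1))
    calc t * (Qd + 1) ≤ (-G / (Qd + 1)) * (Qd + 1) :=
          mul_le_mul_of_nonneg_right this (by linarith)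
      _ = -G := by field_simp
  have hfeast := feas_segment (A := A) (B := B) (c := c) hf hz (le_of_lt ht0) ht1
  have hle := hopt _ _ hfeast
  rw [obj_expand] at hle
  rw [← hG, ← hQd] at hle
  have h2 : G + t * Qd < 0 := by nlinarith
  nlinarith [mul_pos ht0 (neg_pos.2 h2)]


lemma finsum_dotProduct {ι κ : Type*} [Fintype ι] [Fintype κ] (f : ι → κ → ℝ) (w : κ → ℝ) :
    (∑ i, f i) ⬝ᵥ w = ∑ i, f i ⬝ᵥ w := by
  simp only [dotProduct, Finset.sum_apply, Finset.sum_mul]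
  exact Finset.sum_comm

/-- Every point is in some region `TI`, on which moreover the candidate equals the optimum. -/
lemma coverage (hlam : 0 < lam) {y : Fin n → ℝ} {ξh : Fin p → ℝ} {θh : Fin n → ℝ}
    (hf : feas A B c ξh θh)
    (hopt : ∀ ζ η, feas A B c ζ η → obj lam y ξh θh ≤ obj lam y ζ η) :
    ∃ I : Finset (Fin m), y ∈ TI A B c lam I ∧
      xiI A B c lam I y = ξh ∧ thI A B c lam I y = θh := by
  classical
  set J : Finset (Fin m) :=
    Finset.univ.filter (fun i => (A *ᵥ ξh + B *ᵥ θh) i = c i) with hJ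
  obtain ⟨I, hIJ, hind, hspan⟩ := exists_indep_span (fun i => Fin.append (A i) (B i)) J
  have hM : IsUnit (MI A B lam I) := isUnit_MI hlam hind
  have hrowsxh : AI A I *ᵥ ξh + BI B I *ᵥ θh = cI c I := by
    funext i
    have hiJ : i.1 ∈ J := hIJ i.2
    have h := (Finset.mem_filter.1 hiJ).2
    simpa [AI, BI, cI, Matrix.mulVec, Matrix.submatrix, dotProduct] using h
  have hkerJ : ∀ (dξ : Fin p → ℝ) (dθ : Fin n → ℝ),
      AI A I *ᵥ dξ + BI B I *ᵥ dθ = 0 → ∀ j ∈ J, A j ⬝ᵥ dξ + B j ⬝ᵥ dθ = 0 := by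
    intro dξ dθ hker j hj
    obtain ⟨g, hg⟩ := (Submodule.mem_span_range_iff_exists_fun ℝ).1 (hspan j hj)
    have h1 : A j ⬝ᵥ dξ + B j ⬝ᵥ dθ = Fin.append (A j) (B j) ⬝ᵥ Fin.append dξ dθ :=
      (append_dotProduct _ _ _ _).symm
    rw [h1, ← hg, finsum_dotProduct]
    refine Finset.sum_eq_zero fun i _ => ?_
    rw [smul_dotProduct, append_dotProduct]
    have h0 : (AI A I *ᵥ dξ + BI B I *ᵥ dθ) i = 0 := by rw [hker]; rfl
    have h2 : A i.1 ⬝ᵥ dξ + B i.1 ⬝ᵥ dθ = 0 := by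
      simpa [AI, BI, Matrix.mulVec, Matrix.submatrix, dotProduct] using h0
    simp [h2]
  have hstat : ∀ (dξ : Fin p → ℝ) (dθ : Fin n → ℝ),
      AI A I *ᵥ dξ + BI B I *ᵥ dθ = 0 →
      lam * (ξh ⬝ᵥ dξ) + (θh - y) ⬝ᵥ dθ = 0 := by
    intro dξ dθ hker
    have hfeasball : ∃ ε > 0, ∀ t : ℝ, |t| ≤ ε →
        feas A B c (ξh + t • dξ) (θh + t • dθ) := by
      set sl : Fin m → ℝ := fun i => c i - (A *ᵥ ξh + B *ᵥ θh) i with hsl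
      set rt : Fin m → ℝ := fun i => |A i ⬝ᵥ dξ + B i ⬝ᵥ dθ| with hrt
      have hslpos : ∀ i ∉ J, 0 < sl i := by
        intro i hi
        have hne : (A *ᵥ ξh + B *ᵥ θh) i ≠ c i := by
          intro h; exact hi (Finset.mem_filter.2 ⟨Finset.mem_univ i, h⟩)
        have hle := hf i
        have : (A *ᵥ ξh + B *ᵥ θh) i < c i := lt_of_le_of_ne hle hne
        simp only [hsl]; linarith
      clear_value sl rt
      have hactive : ∀ i ∈ J, ∀ t : ℝ,
          (A *ᵥ (ξh + t • dξ) + B *ᵥ (θh + t • dθ)) i ≤ c i := by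
        intro i hiJ t
        have hz := hkerJ dξ dθ hker i hiJ
        have heq := (Finset.mem_filter.1 hiJ).2
        have hAd : (A *ᵥ dξ) i = A i ⬝ᵥ dξ := rfl
        have hBd : (B *ᵥ dθ) i = B i ⬝ᵥ dθ := rfl
        simp only [Pi.add_apply, mulVec_add, mulVec_smul, Pi.smul_apply, smul_eq_mul] at heq ⊢
        rw [hAd, hBd]
        have hz' : t * (A i ⬝ᵥ dξ) + t * (B i ⬝ᵥ dθ) = 0 := by rw [← mul_add, hz, mul_zero]
        linarith
      by_cases hcase : ((Finset.univ : Finset (Fin m)) \ J).Nonempty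
      · refine ⟨min 1 ((Finset.univ \ J).inf' hcase (fun i => sl i / (rt i + 1))), ?_, ?_⟩
        · apply lt_min one_pos
          rw [Finset.lt_inf'_iff]
          intro i hi
          have h1 := hslpos i (Finset.mem_sdiff.1 hi).2
          have h2 : (0:ℝ) ≤ rt i := by simp only [hrt]; exact abs_nonneg _
          exact div_pos h1 (by linarith)
        · intro t ht i
          by_cases hiJ : i ∈ J
          · exact hactive i hiJ t
          · have hle1 : min 1 ((Finset.univ \ J).inf' hcase (fun i => sl i / (rt i + 1)))
                ≤ sl i / (rt i + 1) :=
              (min_le_right _ _).trans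
                (Finset.inf'_le _ (Finset.mem_sdiff.2 ⟨Finset.mem_univ i, hiJ⟩))
            have htle : |t| ≤ sl i / (rt i + 1) := ht.trans hle1
            have hrtnn : (0:ℝ) ≤ rt i := by simp only [hrt]; exact abs_nonneg _
            have hbound : |t| * rt i ≤ sl i * (rt i / (rt i + 1)) := by
              calc |t| * rt i ≤ (sl i / (rt i + 1)) * rt i :=
                    mul_le_mul_of_nonneg_right htle hrtnn
                _ = sl i * (rt i / (rt i + 1)) := by ring
            have hfrac : rt i / (rt i + 1) < 1 := by
              rw [div_lt_one (by linarith)]; linarith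
            have hslp := hslpos i hiJ
            have hdot : t * (A i ⬝ᵥ dξ + B i ⬝ᵥ dθ) ≤ |t| * rt i := by
              calc t * (A i ⬝ᵥ dξ + B i ⬝ᵥ dθ) ≤ |t * (A i ⬝ᵥ dξ + B i ⬝ᵥ dθ)| := le_abs_self _
                _ = |t| * rt i := by rw [abs_mul]; simp only [hrt]
            have hAd : (A *ᵥ dξ) i = A i ⬝ᵥ dξ := rfl
            have hBd : (B *ᵥ dθ) i = B i ⬝ᵥ dθ := rfl
            simp only [Pi.add_apply, mulVec_add, mulVec_smul, Pi.smul_apply, smul_eq_mul]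
            rw [hAd, hBd]
            have hsl' : sl i = c i - ((A *ᵥ ξh) i + (B *ᵥ θh) i) := by
              simp [hsl]
            nlinarith [hdot, hbound, mul_lt_mul_of_pos_left hfrac hslp, mul_one (sl i)]
      · refine ⟨1, one_pos, fun t ht i => ?_⟩
        have hiJ : i ∈ J := by
          by_contra h; exact hcase ⟨i, Finset.mem_sdiff.2 ⟨Finset.mem_univ i, h⟩⟩
        exact hactive i hiJ t
    obtain ⟨ε, hε0, hfeasb⟩ := hfeasball
    set G := lam * (ξh ⬝ᵥ dξ) + (θh - y) ⬝ᵥ dθ with hGd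
    set Qd := (lam/2) * (dξ ⬝ᵥ dξ) + (1/2) * (dθ ⬝ᵥ dθ) with hQdd
    have hQnn : 0 ≤ Qd := by
      have hq1 : 0 ≤ dξ ⬝ᵥ dξ := Finset.sum_nonneg fun j _ => mul_self_nonneg _
      have hq2 : 0 ≤ dθ ⬝ᵥ dθ := Finset.sum_nonneg fun j _ => mul_self_nonneg _
      rw [hQdd]; positivity
    have hpos : ∀ t : ℝ, 0 < t → t ≤ ε → 0 ≤ t * G + t^2 * Qd := by
      intro t h1 h2
      have h3 := hopt _ _ (hfeasb t (by rwa [abs_of_pos h1]))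
      rw [obj_expand, ← hGd, ← hQdd] at h3
      linarith
    have hneg : ∀ t : ℝ, 0 < t → t ≤ ε → 0 ≤ -(t * G) + t^2 * Qd := by
      intro t h1 h2
      have h3 := hopt _ _ (hfeasb (-t) (by rw [abs_neg, abs_of_pos h1]; exact h2))
      rw [obj_expand, ← hGd, ← hQdd] at h3
      nlinarith [h3]
    rcases lt_trichotomy G 0 with h | h | h
    · exfalso
      set t := min ε (-G/(Qd+1)) with htdef
      have ht0 : 0 < t := lt_min hε0 (div_pos (by linarith) (by linarith))
      have hup := hpos t ht0 (min_le_left _ _)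
      have ht2 : t * (Qd + 1) ≤ -G := by
        calc t * (Qd+1) ≤ (-G/(Qd+1))*(Qd+1) :=
              mul_le_mul_of_nonneg_right (min_le_right _ _) (by linarith)
          _ = -G := by field_simp
      nlinarith [mul_pos ht0 (show 0 < -(G + t*Qd) by nlinarith)]
    · exact h
    · exfalso
      set t := min ε (G/(Qd+1)) with htdef
      have ht0 : 0 < t := lt_min hε0 (div_pos (by linarith) (by linarith))
      have hup := hneg t ht0 (min_le_left _ _)
      have ht2 : t * (Qd + 1) ≤ G := by
        calc t * (Qd+1) ≤ (G/(Qd+1))*(Qd+1) :=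
              mul_le_mul_of_nonneg_right (min_le_right _ _) (by linarith)
          _ = G := by field_simp
      nlinarith [mul_pos ht0 (show 0 < G - t*Qd by nlinarith)]
  -- the candidate equals the optimum, by uniqueness on the affine slice
  have hker0 : AI A I *ᵥ (xiI A B c lam I y - ξh) + BI B I *ᵥ (thI A B c lam I y - θh) = 0 := by
    rw [mulVec_sub, mulVec_sub, sub_add_sub_comm, rows_xI (c := c) hM, hrowsxh, sub_self]
  have hid1 : ξh + (1:ℝ) • (xiI A B c lam I y - ξh) = xiI A B c lam I y := by
    funext j; simp
  have hid2 : θh + (1:ℝ) • (thI A B c lam I y - θh) = thI A B c lam I y := by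
    funext j; simp
  have h1 : obj lam y ξh θh ≤ obj lam y (xiI A B c lam I y) (thI A B c lam I y) := by
    have hexp := obj_expand lam y ξh (xiI A B c lam I y - ξh) θh (thI A B c lam I y - θh) 1
    rw [hid1, hid2] at hexp
    have hstat0 := hstat _ _ hker0
    have hq1 : 0 ≤ (xiI A B c lam I y - ξh) ⬝ᵥ (xiI A B c lam I y - ξh) :=
      Finset.sum_nonneg fun j _ => mul_self_nonneg _
    have hq2 : 0 ≤ (thI A B c lam I y - θh) ⬝ᵥ (thI A B c lam I y - θh) :=
      Finset.sum_nonneg fun j _ => mul_self_nonneg _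
    rw [hexp]
    nlinarith
  have hm2 : obj lam y (xiI A B c lam I y) (thI A B c lam I y)
      ≤ obj lam y (xiI A B c lam I y + (1/2:ℝ) • (ξh - xiI A B c lam I y))
          (thI A B c lam I y + (1/2:ℝ) • (θh - thI A B c lam I y)) := by
    rw [obj_expand]
    have hgr := grad_eq (A := A) (B := B) (c := c) hM hlam y ξh θh
    rw [hrowsxh, sub_self, dotProduct_zero] at hgr
    have hq1 : 0 ≤ (ξh - xiI A B c lam I y) ⬝ᵥ (ξh - xiI A B c lam I y) :=
      Finset.sum_nonneg fun j _ => mul_self_nonneg _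
    have hq2 : 0 ≤ (θh - thI A B c lam I y) ⬝ᵥ (θh - thI A B c lam I y) :=
      Finset.sum_nonneg fun j _ => mul_self_nonneg _
    nlinarith
  obtain ⟨hxieq, htheq⟩ := min_unique hlam h1 hm2
  refine ⟨I, ⟨hM, ?_, ?_⟩, hxieq, htheq⟩
  · rw [show feas A B c (xiI A B c lam I y) (thI A B c lam I y)
        = feas A B c ξh θh by rw [hxieq, htheq]]
    exact hf
  · intro ζ η hfz
    have hvi := opt_VI (A := A) (B := B) (c := c) hlam hf hopt hfz
    have hgr := grad_eq (A := A) (B := B) (c := c) hM hlam y ζ η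
    rw [hxieq, htheq] at hgr
    linarith


/-- Scaled active rows: `ĝᵢ = ((√λ)⁻¹ aᵢ, bᵢ)`. -/
noncomputable def GI (A : Matrix (Fin m) (Fin p) ℝ) (B : Matrix (Fin m) (Fin n) ℝ)
    (lam : ℝ) (I : Finset (Fin m)) : Matrix I (Fin (p+n)) ℝ :=
  fun i => Fin.append ((Real.sqrt lam)⁻¹ • A i.1) (B i.1)

lemma gram_GI (hlam : 0 < lam) : GI A B lam I * (GI A B lam I)ᵀ = MI A B lam I := by
  have hrho : (Real.sqrt lam)⁻¹ * (Real.sqrt lam)⁻¹ = 1/lam := by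
    rw [← mul_inv]
    rw [Real.mul_self_sqrt hlam.le, one_div]
  funext i k
  simp only [Matrix.mul_apply, Matrix.transpose_apply, GI, MI, Matrix.add_apply,
    Matrix.smul_apply, smul_eq_mul]
  rw [Fin.sum_univ_add]
  have h1 : ∀ j : Fin p, Fin.append ((Real.sqrt lam)⁻¹ • A i.1) (B i.1) (Fin.castAdd n j)
      * Fin.append ((Real.sqrt lam)⁻¹ • A k.1) (B k.1) (Fin.castAdd n j)
      = (1/lam) * (A i.1 j * A k.1 j) := by
    intro j
    rw [Fin.append_left, Fin.append_left]
    simp only [Pi.smul_apply, smul_eq_mul]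
    rw [← hrho]; ring
  have h2 : ∀ j : Fin n, Fin.append ((Real.sqrt lam)⁻¹ • A i.1) (B i.1) (Fin.natAdd p j)
      * Fin.append ((Real.sqrt lam)⁻¹ • A k.1) (B k.1) (Fin.natAdd p j)
      = B i.1 j * B k.1 j := by
    intro j
    rw [Fin.append_right, Fin.append_right]
  rw [Finset.sum_congr rfl fun j _ => h1 j, Finset.sum_congr rfl fun j _ => h2 j]
  rw [← Finset.mul_sum]
  simp only [Matrix.mul_apply, Matrix.transpose_apply, AI, BI, Matrix.submatrix_apply, id]
  ring

/-- The θ-coordinate inclusion matrix. -/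
def Rmat (p n : ℕ) : Matrix (Fin (p+n)) (Fin n) ℝ :=
  fun j k => if j = Fin.natAdd p k then 1 else 0

lemma GI_mul_Rmat : GI A B lam I * Rmat p n = BI B I := by
  funext i k
  simp only [Matrix.mul_apply, Rmat, mul_ite, mul_one, mul_zero]
  rw [Finset.sum_ite_eq' Finset.univ (Fin.natAdd p k)]
  simp [GI, Fin.append_right, BI]

lemma MI_symm : (MI A B lam I)ᵀ = MI A B lam I := by
  unfold MI
  rw [transpose_add, transpose_smul, transpose_mul, transpose_mul, transpose_transpose,
    transpose_transpose]

/-- Invariance of the θ-block trace of the oblique projection under enlargement of the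
active row set, given the boundary stationarity (`hstar`). -/
lemma trace_invariance (hlam : 0 < lam) {I I' : Finset (Fin m)}
    (hM : IsUnit (MI A B lam I)) (hM' : IsUnit (MI A B lam I'))
    (C : Matrix I I' ℝ) (hC : GI A B lam I = C * GI A B lam I')
    (hstar : (Rmat p n)ᵀ * ((1 : Matrix (Fin (p+n)) (Fin (p+n)) ℝ)
        - (GI A B lam I)ᵀ * (MI A B lam I)⁻¹ * GI A B lam I) * (GI A B lam I')ᵀ = 0) :
    Matrix.trace ((BI B I')ᵀ * (MI A B lam I')⁻¹ * BI B I')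
      = Matrix.trace ((BI B I)ᵀ * (MI A B lam I)⁻¹ * BI B I) := by
  set G := GI A B lam I with hGdef
  set G' := GI A B lam I' with hG'def
  set M := MI A B lam I with hMdef
  set M' := MI A B lam I' with hM'def
  set P : Matrix (Fin (p+n)) (Fin (p+n)) ℝ := Gᵀ * M⁻¹ * G with hP
  set P' : Matrix (Fin (p+n)) (Fin (p+n)) ℝ := G'ᵀ * M'⁻¹ * G' with hP'
  have hMG : G * Gᵀ = M := gram_GI hlam
  have hM'G : G' * G'ᵀ = M' := gram_GI hlam
  have hM'inv : M' * M'⁻¹ = 1 :=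
    Matrix.mul_nonsing_inv _ ((Matrix.isUnit_iff_isUnit_det _).1 hM')
  have hPP' : P * P' = P := by
    have h1 : G * G'ᵀ = C * M' := by rw [hC, Matrix.mul_assoc, hM'G]
    calc P * P' = Gᵀ * M⁻¹ * ((G * G'ᵀ) * (M'⁻¹ * G')) := by
          simp only [hP, hP', Matrix.mul_assoc]
      _ = Gᵀ * M⁻¹ * (C * (M' * M'⁻¹) * G') := by rw [h1]; simp only [Matrix.mul_assoc]
      _ = Gᵀ * M⁻¹ * (C * G') := by rw [hM'inv, Matrix.mul_one]
      _ = P := by rw [← hC, hP]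
  have hBI : BI B I = G * Rmat p n := (GI_mul_Rmat (A := A)).symm
  have hBI' : BI B I' = G' * Rmat p n := (GI_mul_Rmat (A := A)).symm
  have htr : (BI B I)ᵀ * M⁻¹ * BI B I = (Rmat p n)ᵀ * P * Rmat p n := by
    rw [hBI, Matrix.transpose_mul, hP]
    simp only [Matrix.mul_assoc]
  have htr' : (BI B I')ᵀ * M'⁻¹ * BI B I' = (Rmat p n)ᵀ * P' * Rmat p n := by
    rw [hBI', Matrix.transpose_mul, hP']
    simp only [Matrix.mul_assoc]
  rw [htr, htr']
  have hdiff : (Rmat p n)ᵀ * P' * Rmat p n - (Rmat p n)ᵀ * P * Rmat p n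
      = ((Rmat p n)ᵀ * (1 - P) * G'ᵀ) * (M'⁻¹ * (G' * Rmat p n)) := by
    have e1 : P' - P = (1 - P) * P' := by
      rw [Matrix.sub_mul, Matrix.one_mul, hPP']
    calc (Rmat p n)ᵀ * P' * Rmat p n - (Rmat p n)ᵀ * P * Rmat p n
        = (Rmat p n)ᵀ * (P' - P) * Rmat p n := by
          rw [Matrix.mul_sub, Matrix.sub_mul]
      _ = (Rmat p n)ᵀ * ((1 - P) * P') * Rmat p n := by rw [e1]
      _ = ((Rmat p n)ᵀ * (1 - P) * G'ᵀ) * (M'⁻¹ * (G' * Rmat p n)) := by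
          rw [hP']
          simp only [Matrix.mul_assoc]
  have : (Rmat p n)ᵀ * P' * Rmat p n - (Rmat p n)ᵀ * P * Rmat p n = 0 := by
    rw [hdiff, hstar, Matrix.zero_mul]
  have := congrArg Matrix.trace this
  rw [Matrix.trace_sub, Matrix.trace_zero] at this
  linarith


/-- From the componentwise stationarity identities, the matrix `★` identity. -/
lemma star_matrix (hlam : 0 < lam) {I I' : Finset (Fin m)}
    (hstarvec : ∀ i' : I',
      (BI B I)ᵀ *ᵥ ((MI A B lam I)⁻¹ *ᵥ
        ((1/lam) • (AI A I *ᵥ A i'.1) + BI B I *ᵥ B i'.1)) = B i'.1) :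
    (Rmat p n)ᵀ * ((1 : Matrix (Fin (p+n)) (Fin (p+n)) ℝ)
      - (GI A B lam I)ᵀ * (MI A B lam I)⁻¹ * GI A B lam I) * (GI A B lam I')ᵀ = 0 := by
  have hrho : (Real.sqrt lam)⁻¹ * (Real.sqrt lam)⁻¹ = 1/lam := by
    rw [← mul_inv, Real.mul_self_sqrt hlam.le, one_div]
  funext k i'
  have hw : ∀ i : I, (GI A B lam I * (GI A B lam I')ᵀ) i i'
      = ((1/lam) • (AI A I *ᵥ A i'.1) + BI B I *ᵥ B i'.1) i := by
    intro i
    simp only [Matrix.mul_apply, Matrix.transpose_apply, GI]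
    rw [Fin.sum_univ_add]
    have h1 : ∀ j : Fin p, Fin.append ((Real.sqrt lam)⁻¹ • A i.1) (B i.1) (Fin.castAdd n j)
        * Fin.append ((Real.sqrt lam)⁻¹ • A i'.1) (B i'.1) (Fin.castAdd n j)
        = (1/lam) * (A i.1 j * A i'.1 j) := by
      intro j
      rw [Fin.append_left, Fin.append_left]
      simp only [Pi.smul_apply, smul_eq_mul]
      rw [← hrho]; ring
    have h2 : ∀ j : Fin n, Fin.append ((Real.sqrt lam)⁻¹ • A i.1) (B i.1) (Fin.natAdd p j)
        * Fin.append ((Real.sqrt lam)⁻¹ • A i'.1) (B i'.1) (Fin.natAdd p j)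
        = B i.1 j * B i'.1 j := by
      intro j
      rw [Fin.append_right, Fin.append_right]
    rw [Finset.sum_congr rfl fun j _ => h1 j, Finset.sum_congr rfl fun j _ => h2 j,
      ← Finset.mul_sum]
    simp only [Pi.add_apply, Pi.smul_apply, smul_eq_mul, AI, BI, Matrix.mulVec,
      dotProduct, Matrix.submatrix_apply, id]
  -- expand the (k,i') entry
  have hRentry : ∀ (Y : Matrix (Fin (p+n)) (Fin (p+n)) ℝ),
      ((Rmat p n)ᵀ * (Y * (GI A B lam I')ᵀ)) k i' = (Y * (GI A B lam I')ᵀ) (Fin.natAdd p k) i' := by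
    intro Y
    simp only [Matrix.mul_apply, Matrix.transpose_apply, Rmat, ite_mul, one_mul, zero_mul]
    rw [Finset.sum_ite_eq' Finset.univ (Fin.natAdd p k)]
    simp
  have hassoc : (Rmat p n)ᵀ * ((1 : Matrix (Fin (p+n)) (Fin (p+n)) ℝ)
      - (GI A B lam I)ᵀ * (MI A B lam I)⁻¹ * GI A B lam I) * (GI A B lam I')ᵀ
      = (Rmat p n)ᵀ * (((1 : Matrix (Fin (p+n)) (Fin (p+n)) ℝ)
      - (GI A B lam I)ᵀ * (MI A B lam I)⁻¹ * GI A B lam I) * (GI A B lam I')ᵀ) := by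
    simp only [Matrix.mul_assoc]
  rw [hassoc, hRentry]
  -- entry of (1 - P) * G'ᵀ at (natAdd p k, i')
  have hsplit : (((1 : Matrix (Fin (p+n)) (Fin (p+n)) ℝ)
      - (GI A B lam I)ᵀ * (MI A B lam I)⁻¹ * GI A B lam I) * (GI A B lam I')ᵀ) (Fin.natAdd p k) i'
      = (GI A B lam I')ᵀ (Fin.natAdd p k) i'
        - ((GI A B lam I)ᵀ * ((MI A B lam I)⁻¹ * (GI A B lam I * (GI A B lam I')ᵀ))) (Fin.natAdd p k) i' := by
    rw [Matrix.sub_mul, Matrix.one_mul]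
    simp only [Matrix.sub_apply, Matrix.mul_assoc]
  rw [hsplit]
  have hterm2 : ((GI A B lam I)ᵀ * ((MI A B lam I)⁻¹ * (GI A B lam I * (GI A B lam I')ᵀ)))
      (Fin.natAdd p k) i'
      = ((BI B I)ᵀ *ᵥ ((MI A B lam I)⁻¹ *ᵥ
          ((1/lam) • (AI A I *ᵥ A i'.1) + BI B I *ᵥ B i'.1))) k := by
    simp only [Matrix.mul_apply, Matrix.transpose_apply, Matrix.mulVec, dotProduct]
    refine Finset.sum_congr rfl fun i _ => ?_
    have hGik : GI A B lam I i (Fin.natAdd p k) = BI B I i k := by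
      simp [GI, Fin.append_right, BI]
    rw [hGik]
    congr 1
    refine Finset.sum_congr rfl fun l _ => ?_
    congr 1
    exact hw l
  rw [hterm2, hstarvec i']
  simp only [Matrix.transpose_apply, Matrix.zero_apply, GI, Fin.append_right]
  exact sub_self _


lemma uu_add (y v : Fin n → ℝ) :
    uu A B c lam I (y + v) = uu A B c lam I y + (MI A B lam I)⁻¹ *ᵥ (BI B I *ᵥ v) := by
  unfold uu
  rw [mulVec_add]
  have h : BI B I *ᵥ y + BI B I *ᵥ v - cI c I = (BI B I *ᵥ y - cI c I) + BI B I *ᵥ v := by abel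
  rw [h, mulVec_add]

lemma xiI_add (y v : Fin n → ℝ) :
    xiI A B c lam I (y + v) = xiI A B c lam I y
      + (-(1/lam)) • ((AI A I)ᵀ *ᵥ ((MI A B lam I)⁻¹ *ᵥ (BI B I *ᵥ v))) := by
  unfold xiI
  rw [uu_add, mulVec_add, smul_add]

lemma thI_add (y v : Fin n → ℝ) :
    thI A B c lam I (y + v) = thI A B c lam I y
      + (v - (BI B I)ᵀ *ᵥ ((MI A B lam I)⁻¹ *ᵥ (BI B I *ᵥ v))) := by
  unfold thI
  rw [uu_add, mulVec_add]
  abel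

lemma psi_diff (i' : Fin m) (y v : Fin n → ℝ) :
    (A i' ⬝ᵥ xiI A B c lam I (y + v) + B i' ⬝ᵥ thI A B c lam I (y + v))
      - (A i' ⬝ᵥ xiI A B c lam I y + B i' ⬝ᵥ thI A B c lam I y)
    = (B i' - (BI B I)ᵀ *ᵥ ((MI A B lam I)⁻¹ *ᵥ
        ((1/lam) • (AI A I *ᵥ A i') + BI B I *ᵥ B i'))) ⬝ᵥ v := by
  set q : I → ℝ := (MI A B lam I)⁻¹ *ᵥ (BI B I *ᵥ v) with hq
  set w : I → ℝ := (1/lam) • (AI A I *ᵥ A i') + BI B I *ᵥ B i' with hwdef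
  have hdotA : A i' ⬝ᵥ ((AI A I)ᵀ *ᵥ q) = (AI A I *ᵥ A i') ⬝ᵥ q := by
    rw [dotProduct_mulVec, vecMul_transpose]
  have hdotB : B i' ⬝ᵥ ((BI B I)ᵀ *ᵥ q) = (BI B I *ᵥ B i') ⬝ᵥ q := by
    rw [dotProduct_mulVec, vecMul_transpose]
  have hMinvsymm : ((MI A B lam I)⁻¹)ᵀ = (MI A B lam I)⁻¹ := by
    rw [Matrix.transpose_nonsing_inv, MI_symm]
  have hwq : w ⬝ᵥ q = ((BI B I)ᵀ *ᵥ ((MI A B lam I)⁻¹ *ᵥ w)) ⬝ᵥ v := by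
    rw [hq, dotProduct_mulVec]
    have h1 : w ᵥ* (MI A B lam I)⁻¹ = (MI A B lam I)⁻¹ *ᵥ w := by
      rw [← hMinvsymm, mulVec_transpose, hMinvsymm]
    rw [h1, dotProduct_mulVec]
    have h2 : ((MI A B lam I)⁻¹ *ᵥ w) ᵥ* BI B I = (BI B I)ᵀ *ᵥ ((MI A B lam I)⁻¹ *ᵥ w) := by
      rw [mulVec_transpose]
    rw [h2]
  rw [xiI_add, thI_add, dotProduct_add, dotProduct_add]
  rw [dotProduct_smul, smul_eq_mul, hdotA]
  rw [dotProduct_sub, hdotB]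
  rw [sub_dotProduct, ← hwq]
  have hwexp : w ⬝ᵥ q = (1/lam) * ((AI A I *ᵥ A i') ⬝ᵥ q) + (BI B I *ᵥ B i') ⬝ᵥ q := by
    rw [hwdef, add_dotProduct, smul_dotProduct, smul_eq_mul]
  linarith

/-- At an interior point of `TI`, each active constraint yields the stationarity identity. -/
lemma interior_star (hlam : 0 < lam) {y : Fin n → ℝ}
    (hy : y ∈ interior (TI A B c lam I)) {i' : Fin m}
    (hact : A i' ⬝ᵥ xiI A B c lam I y + B i' ⬝ᵥ thI A B c lam I y = c i') :
    (BI B I)ᵀ *ᵥ ((MI A B lam I)⁻¹ *ᵥ ((1/lam) • (AI A I *ᵥ A i') + BI B I *ᵥ B i'))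
      = B i' := by
  set z : Fin n → ℝ := (BI B I)ᵀ *ᵥ ((MI A B lam I)⁻¹ *ᵥ
    ((1/lam) • (AI A I *ᵥ A i') + BI B I *ᵥ B i')) with hz
  set l : Fin n → ℝ := B i' - z with hl
  obtain ⟨ε, hε0, hball⟩ := Metric.mem_nhds_iff.1 (mem_interior_iff_mem_nhds.1 hy)
  have hle : ∀ v : Fin n → ℝ, ‖v‖ < ε → l ⬝ᵥ v ≤ 0 := by
    intro v hv
    have hyv : y + v ∈ TI A B c lam I :=
      hball (by simpa [Metric.mem_ball, dist_eq_norm, add_sub_cancel_left] using hv)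
    have hfeas := hyv.2.1 i'
    have hψ : A i' ⬝ᵥ xiI A B c lam I (y + v) + B i' ⬝ᵥ thI A B c lam I (y + v) ≤ c i' := by
      exact hfeas
    have hd := psi_diff (A := A) (B := B) (c := c) (lam := lam) (I := I) i' y v
    linarith
  have hl0 : l = 0 := by
    funext k
    set N : ℝ := ‖(Pi.single k 1 : Fin n → ℝ)‖ with hN
    have hNnn : 0 ≤ N := norm_nonneg _
    set t : ℝ := ε/2 / (N + 1) with htd
    have ht0 : 0 < t := by positivity
    have hnorm : ∀ s : ℝ, |s| = t → ‖s • (Pi.single k 1 : Fin n → ℝ)‖ < ε := by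
      intro s hs
      rw [norm_smul, Real.norm_eq_abs, hs, ← hN]
      have hfrac : N / (N + 1) < 1 := by rw [div_lt_one (by linarith)]; linarith
      have : t * N = (ε/2) * (N / (N+1)) := by rw [htd]; ring
      nlinarith [mul_lt_mul_of_pos_left hfrac (show (0:ℝ) < ε/2 by linarith)]
    have hpos := hle (t • (Pi.single k 1 : Fin n → ℝ)) (hnorm t (abs_of_pos ht0))
    have hneg := hle ((-t) • (Pi.single k 1 : Fin n → ℝ))
      (hnorm (-t) (by rw [abs_neg, abs_of_pos ht0]))
    rw [dotProduct_smul, smul_eq_mul, dotProduct_single, mul_one] at hpos hneg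
    have : l k = 0 := by nlinarith
    simpa using this
  rw [hl] at hl0
  have := sub_eq_zero.1 hl0
  rw [hz] at this
  exact this.symm


noncomputable def scmap (p n : ℕ) (lam : ℝ) : ((Fin (p+n)) → ℝ) →ₗ[ℝ] ((Fin (p+n)) → ℝ) where
  toFun v := fun j =>
    Fin.append (fun _ : Fin p => (Real.sqrt lam)⁻¹) (fun _ : Fin n => (1:ℝ)) j * v j
  map_add' x y := by funext j; simp [mul_add]
  map_smul' r x := by funext j; simp only [Pi.smul_apply, smul_eq_mul, RingHom.id_apply]; ring

lemma scmap_append (lam : ℝ) (a : Fin p → ℝ) (b : Fin n → ℝ) :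
    scmap p n lam (Fin.append a b) = Fin.append ((Real.sqrt lam)⁻¹ • a) b := by
  funext j
  refine Fin.addCases (fun j0 => ?_) (fun j0 => ?_) j
  · simp [scmap, Fin.append_left]
  · simp [scmap, Fin.append_right]

lemma exists_C {I I' : Finset (Fin m)}
    (hspanmem : ∀ i : I, Fin.append (A i.1) (B i.1) ∈
      Submodule.span ℝ (Set.range (fun i' : I' => Fin.append (A i'.1) (B i'.1)))) :
    ∃ C : Matrix I I' ℝ, GI A B lam I = C * GI A B lam I' := by
  have hgi : ∀ i : I, ∃ g : I' → ℝ, ∑ i', g i' • GI A B lam I' i' = GI A B lam I i := by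
    intro i
    obtain ⟨g, hg⟩ := (Submodule.mem_span_range_iff_exists_fun ℝ).1 (hspanmem i)
    refine ⟨g, ?_⟩
    have h2 := congrArg (scmap p n lam) hg
    rw [map_sum] at h2
    simp only [LinearMap.map_smul] at h2
    rw [scmap_append] at h2
    have h3 : ∀ i' : I', g i' • scmap p n lam (Fin.append (A i'.1) (B i'.1))
        = g i' • GI A B lam I' i' := fun i' => by rw [scmap_append]; rfl
    rw [Finset.sum_congr rfl (fun i' _ => h3 i')] at h2
    exact h2
  choose g hg using hgi
  refine ⟨fun i i' => g i i', ?_⟩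
  funext i j
  show GI A B lam I i j = ∑ k, g i k * GI A B lam I' k j
  have h4 := congrFun (hg i) j
  simp only [Finset.sum_apply, Pi.smul_apply, smul_eq_mul] at h4
  exact h4.symm

lemma divg_interior (hM : IsUnit (MI A B lam I)) {θh : (Fin n → ℝ) → (Fin n → ℝ)}
    {y : Fin n → ℝ} (hEv : θh =ᶠ[nhds y] thI A B c lam I) :
    DifferentiableAt ℝ θh y ∧
    divg θh y = (n : ℝ) - Matrix.trace ((BI B I)ᵀ * (MI A B lam I)⁻¹ * BI B I) := by
  set Nm : Matrix (Fin n) (Fin n) ℝ := (BI B I)ᵀ * (MI A B lam I)⁻¹ * BI B I with hNm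
  set wv : Fin n → ℝ := (BI B I)ᵀ *ᵥ ((MI A B lam I)⁻¹ *ᵥ cI c I) with hwv
  have hform : thI A B c lam I = fun y' => y' - Nm *ᵥ y' + wv := by
    funext y'
    show y' - (BI B I)ᵀ *ᵥ ((MI A B lam I)⁻¹ *ᵥ (BI B I *ᵥ y' - cI c I)) = _
    rw [mulVec_sub, mulVec_sub]
    rw [mulVec_mulVec, mulVec_mulVec]
    rw [hNm, hwv]
    abel
  set L := LinearMap.toContinuousLinearMap (Matrix.mulVecLin Nm) with hL
  have hdiffL : Differentiable ℝ (fun y' : Fin n → ℝ => y' - L y' + wv) :=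
    (differentiable_id.sub L.differentiable).add_const wv
  have hLv : (fun y' : Fin n → ℝ => y' - L y' + wv) = (fun y' => y' - Nm *ᵥ y' + wv) := rfl
  have hderiv : fderiv ℝ (fun y' : Fin n → ℝ => y' - Nm *ᵥ y' + wv) y
      = ContinuousLinearMap.id ℝ (Fin n → ℝ) - L := by
    have h1 : (fun y' : Fin n → ℝ => y' - Nm *ᵥ y' + wv)
        = fun y' => (ContinuousLinearMap.id ℝ (Fin n → ℝ) - L) y' + wv := by
      funext y'
      simp only [ContinuousLinearMap.sub_apply, ContinuousLinearMap.id_apply]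
      rfl
    rw [h1, fderiv_add_const, ContinuousLinearMap.fderiv]
  have hDiff : DifferentiableAt ℝ θh y := by
    rw [hEv.differentiableAt_iff, hform, ← hLv]
    exact hdiffL y
  refine ⟨hDiff, ?_⟩
  unfold divg
  rw [hEv.fderiv_eq, hform, hderiv]
  have hterm : ∀ i : Fin n,
      (ContinuousLinearMap.id ℝ (Fin n → ℝ) - L) (Pi.single i 1) i = 1 - Nm i i := by
    intro i
    simp only [ContinuousLinearMap.sub_apply, ContinuousLinearMap.id_apply, Pi.sub_apply]
    congr 1
    · exact Pi.single_eq_same i 1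
    · show (Nm *ᵥ Pi.single i 1) i = Nm i i
      rw [Matrix.mulVec_single]
      exact mul_one _
  rw [Finset.sum_congr rfl fun i _ => hterm i]
  rw [Finset.sum_sub_distrib, Finset.sum_const, Finset.card_univ, Fintype.card_fin,
    nsmul_eq_mul, mul_one]
  rfl


lemma AI_mulVec_apply (ξ : Fin p → ℝ) (i : I) : (AI A I *ᵥ ξ) i = A i.1 ⬝ᵥ ξ := rfl

lemma BI_mulVec_apply (θ : Fin n → ℝ) (i : I) : (BI B I *ᵥ θ) i = B i.1 ⬝ᵥ θ := rfl

end QPPaux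

/-- Quadratically perturbed projection onto the polyhedron
`Q = {(ξ,θ) : Aξ + Bθ ≤ c}`, with objective `(1/2)‖θ − y‖₂² + (λ/2)‖ξ‖₂²`, `λ > 0`:
(i) the minimizer is unique; (ii) for almost every `y`, `θ̂_λ` is differentiable at `y`
and, for any `I_y ⊆ J_y` indexing a maximal linearly independent subset of the binding
rows `[a_iᵀ, b_iᵀ]`, the matrix `B_{I_y} B_{I_y}ᵀ + (1/λ) A_{I_y} A_{I_y}ᵀ` is
invertible and the divergence equals
`n − trace(B_{I_y}ᵀ (B_{I_y} B_{I_y}ᵀ + (1/λ) A_{I_y} A_{I_y}ᵀ)⁻¹ B_{I_y})`. -/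
theorem divergence_quadratically_perturbed_projection {m p n : ℕ}
    (A : Matrix (Fin m) (Fin p) ℝ) (B : Matrix (Fin m) (Fin n) ℝ)
    (c : Fin m → ℝ) (lam : ℝ) (hlam : 0 < lam)
    (hQ : ∃ ξ : Fin p → ℝ, ∃ θ : Fin n → ℝ, A.mulVec ξ + B.mulVec θ ≤ c)
    (θhat : (Fin n → ℝ) → (Fin n → ℝ)) (ξhat : (Fin n → ℝ) → (Fin p → ℝ))
    (hmin : ∀ y, A.mulVec (ξhat y) + B.mulVec (θhat y) ≤ c ∧
      ∀ ξ θ, A.mulVec ξ + B.mulVec θ ≤ c →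
        (1 / 2) * (∑ j, (θhat y j - y j) ^ 2) + (lam / 2) * (∑ j, (ξhat y j) ^ 2)
          ≤ (1 / 2) * (∑ j, (θ j - y j) ^ 2) + (lam / 2) * (∑ j, (ξ j) ^ 2)) :
    (∀ y, ∀ ξ' : Fin p → ℝ, ∀ θ' : Fin n → ℝ,
      (A.mulVec ξ' + B.mulVec θ' ≤ c ∧
        ∀ ξ θ, A.mulVec ξ + B.mulVec θ ≤ c →
          (1 / 2) * (∑ j, (θ' j - y j) ^ 2) + (lam / 2) * (∑ j, (ξ' j) ^ 2)
            ≤ (1 / 2) * (∑ j, (θ j - y j) ^ 2) + (lam / 2) * (∑ j, (ξ j) ^ 2)) →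
      θ' = θhat y ∧ ξ' = ξhat y) ∧
    (∀ᵐ y ∂(volume : Measure (Fin n → ℝ)), DifferentiableAt ℝ θhat y ∧
      ∀ I : Finset (Fin m),
        (↑I : Set (Fin m)) ⊆ {i | A i ⬝ᵥ ξhat y + B i ⬝ᵥ θhat y = c i} →
        LinearIndependent ℝ (fun i : I => Fin.append (A i.1) (B i.1)) →
        (∀ j ∈ {i : Fin m | A i ⬝ᵥ ξhat y + B i ⬝ᵥ θhat y = c i},
          Fin.append (A j) (B j) ∈
            Submodule.span ℝ (Set.range (fun i : I => Fin.append (A i.1) (B i.1)))) →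
        IsUnit (B.submatrix (fun i : I => (i : Fin m)) id
              * (B.submatrix (fun i : I => (i : Fin m)) id)ᵀ
            + (1 / lam) • (A.submatrix (fun i : I => (i : Fin m)) id
              * (A.submatrix (fun i : I => (i : Fin m)) id)ᵀ)) ∧
        divg θhat y = (n : ℝ) - Matrix.trace
          ((B.submatrix (fun i : I => (i : Fin m)) id)ᵀ
            * (B.submatrix (fun i : I => (i : Fin m)) id
                * (B.submatrix (fun i : I => (i : Fin m)) id)ᵀ
              + (1 / lam) • (A.submatrix (fun i : I => (i : Fin m)) id
                * (A.submatrix (fun i : I => (i : Fin m)) id)ᵀ))⁻¹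
            * B.submatrix (fun i : I => (i : Fin m)) id)) := by
  classical
  have key : ∀ y (ξ' : Fin p → ℝ) (θ' : Fin n → ℝ), QPPaux.feas A B c ξ' θ' →
      (∀ ζ η, QPPaux.feas A B c ζ η →
        QPPaux.obj lam y ξ' θ' ≤ QPPaux.obj lam y ζ η) →
      θ' = θhat y ∧ ξ' = ξhat y := by
    intro y ξ' θ' hf' hopt'
    obtain ⟨hfy, hopty⟩ := hmin y
    have h1 : QPPaux.obj lam y (ξhat y) (θhat y) ≤ QPPaux.obj lam y ξ' θ' := hopty ξ' θ' hf'
    have hmfeas : QPPaux.feas A B c (ξ' + (1/2:ℝ) • (ξhat y - ξ'))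
        (θ' + (1/2:ℝ) • (θhat y - θ')) :=
      QPPaux.feas_segment hf' hfy (by norm_num) (by norm_num)
    have hm2 : QPPaux.obj lam y ξ' θ' ≤ QPPaux.obj lam y (ξ' + (1/2:ℝ) • (ξhat y - ξ'))
        (θ' + (1/2:ℝ) • (θhat y - θ')) := hopt' _ _ hmfeas
    obtain ⟨he1, he2⟩ := QPPaux.min_unique hlam h1 hm2
    exact ⟨he2, he1⟩
  constructor
  · intro y ξ' θ' h'
    exact key y ξ' θ' h'.1 h'.2
  · have hN : volume (⋃ I : Finset (Fin m), frontier (QPPaux.TI A B c lam I)) = 0 :=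
      measure_iUnion_null fun I => (QPPaux.convex_TI).addHaar_frontier volume
    have hae := MeasureTheory.measure_eq_zero_iff_ae_notMem.1 hN
    refine hae.mono fun y hy => ?_
    obtain ⟨hfy, hopty⟩ := hmin y
    obtain ⟨I, hyTI, hxieq, htheq⟩ :=
      QPPaux.coverage hlam hfy (fun ζ η h => hopty ζ η h)
    have hyint : y ∈ interior (QPPaux.TI A B c lam I) := by
      by_contra hni
      apply hy
      refine Set.mem_iUnion.2 ⟨I, ?_⟩
      rw [QPPaux.isClosed_TI.frontier_eq]
      exact ⟨hyTI, hni⟩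
    have hM : IsUnit (QPPaux.MI A B lam I) := hyTI.1
    have hloc : ∀ y' ∈ interior (QPPaux.TI A B c lam I),
        θhat y' = QPPaux.thI A B c lam I y' := by
      intro y' hy'
      have hy'TI := interior_subset hy'
      have hopt' := QPPaux.TI_opt hlam hy'TI
      have hfeas' := hy'TI.2.1
      exact (key y' _ _ hfeas' hopt').1.symm
    have hEv : θhat =ᶠ[nhds y] QPPaux.thI A B c lam I :=
      Filter.eventuallyEq_of_mem (isOpen_interior.mem_nhds hyint) hloc
    obtain ⟨hDiff, hdivg⟩ := QPPaux.divg_interior hM hEv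
    refine ⟨hDiff, ?_⟩
    intro I' hsub hind' hspan'
    have hM' : IsUnit (QPPaux.MI A B lam I') := QPPaux.isUnit_MI hlam hind'
    refine ⟨hM', ?_⟩
    have hactI : ∀ i : I, A i.1 ⬝ᵥ ξhat y + B i.1 ⬝ᵥ θhat y = c i.1 := by
      intro i
      have hrw := QPPaux.rows_xI (A := A) (B := B) (c := c) hM y
      rw [hxieq, htheq] at hrw
      exact congrFun hrw i
    have hspanmem : ∀ i : I, Fin.append (A i.1) (B i.1) ∈
        Submodule.span ℝ (Set.range (fun i' : I' => Fin.append (A i'.1) (B i'.1))) :=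
      fun i => hspan' i.1 (hactI i)
    obtain ⟨C, hC⟩ := QPPaux.exists_C hspanmem
    have hstarvec : ∀ i' : I',
        (QPPaux.BI B I)ᵀ *ᵥ ((QPPaux.MI A B lam I)⁻¹ *ᵥ
          ((1/lam) • (QPPaux.AI A I *ᵥ A i'.1) + QPPaux.BI B I *ᵥ B i'.1)) = B i'.1 := by
      intro i'
      have hact : A i'.1 ⬝ᵥ ξhat y + B i'.1 ⬝ᵥ θhat y = c i'.1 :=
        hsub (Finset.mem_coe.2 i'.2)
      refine QPPaux.interior_star hlam hyint ?_
      rw [hxieq, htheq]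
      exact hact
    have hstar := QPPaux.star_matrix hlam hstarvec
    have htr := QPPaux.trace_invariance hlam hM hM' C hC hstar
    show divg θhat y = (n : ℝ)
      - Matrix.trace ((QPPaux.BI B I')ᵀ * (QPPaux.MI A B lam I')⁻¹ * QPPaux.BI B I')
    rw [hdivg, htr]
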